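/- Let S be a linear subspace of ℝⁿ × ℝᵐ and let (x,y) ∈ S. Then ‖y‖² (‖x‖² − ‖π_{S^⊥}(x,0)‖²) ≥ ‖x‖² ‖π_{S^⊥}(0,y)‖². -/

import Mathlib

/-- The Euclidean space `ℝⁿ × ℝᵐ` with the (L²) product inner product. -/
noncomputable abbrev E2 (n m : ℕ) :=
  WithLp 2 (EuclideanSpace ℝ (Fin n) × EuclideanSpace ℝ (Fin m))

/-- The point `(x, y)` of `ℝⁿ × ℝᵐ`. -/
noncomputable def mk2 {n m : ℕ} (x : EuclideanSpace ℝ (Fin n))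
    (y : EuclideanSpace ℝ (Fin m)) : E2 n m :=
  (WithLp.linearEquiv 2 ℝ _).symm (x, y)

/-- The orthogonal projection of `E` onto the subspace `V`, as a map `E → E`. -/
noncomputable def proj {E : Type*} [NormedAddCommGroup E] [InnerProductSpace ℝ E]
    (V : Submodule ℝ E) [Submodule.HasOrthogonalProjection V] : E →L[ℝ] E :=
  V.subtypeL.comp (Submodule.orthogonalProjectionOnto V)

lemma proj_inner {E : Type*} [NormedAddCommGroup E] [InnerProductSpace ℝ E]
    (V : Submodule ℝ E) [Submodule.HasOrthogonalProjection V] (u : E) :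
    inner (𝕜 := ℝ) u (proj V u) = ‖proj V u‖ ^ 2 := by
  have h : inner (𝕜 := ℝ) (u - proj V u) (proj V u) = 0 :=
    Submodule.starProjection_inner_eq_zero (K := V) u (proj V u) (Submodule.orthogonalProjectionOnto V u).2
  have h' : inner (𝕜 := ℝ) u (proj V u) - inner (𝕜 := ℝ) ((proj V u : E)) (proj V u) = 0 := by
    rw [← inner_sub_left]; exact h
  have h2 : inner (𝕜 := ℝ) u (proj V u) = inner (𝕜 := ℝ) (proj V u) (proj V u) := by linarith
  rw [h2, real_inner_self_eq_norm_sq]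

/-- If `S` is a linear subspace of `ℝⁿ × ℝᵐ` and `(x,y) ∈ S`, then
`‖y‖² (‖x‖² − ‖π_{S^⊥}(x,0)‖²) ≥ ‖x‖² ‖π_{S^⊥}(0,y)‖²`. -/
theorem stmt4 (n m : ℕ) (S : Submodule ℝ (E2 n m))
    (x : EuclideanSpace ℝ (Fin n)) (y : EuclideanSpace ℝ (Fin m))
    (hxy : mk2 x y ∈ S) :
    ‖x‖ ^ 2 * ‖proj Sᗮ (mk2 0 y)‖ ^ 2 ≤ ‖y‖ ^ 2 * (‖x‖ ^ 2 - ‖proj Sᗮ (mk2 x 0)‖ ^ 2) := by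
  set v : E2 n m := proj Sᗮ (mk2 x 0) with hv
  have hsum : mk2 x 0 + mk2 0 y = mk2 x y := by
    unfold mk2; rw [← map_add]; norm_num
  have h0 : proj Sᗮ (mk2 x y) = 0 := by
    have : Submodule.orthogonalProjectionOnto Sᗮ (mk2 x y) = 0 :=
      Submodule.orthogonalProjectionOnto_eq_zero_iff.2 (Submodule.le_orthogonal_orthogonal S hxy)
    simp [proj, this]
  have hneg : proj Sᗮ (mk2 0 y) = -v := by
    have hadd : v + proj Sᗮ (mk2 0 y) = 0 := by
      rw [hv, ← map_add, hsum, h0]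
    exact eq_neg_of_add_eq_zero_right hadd
  have hnorm : ‖proj Sᗮ (mk2 0 y)‖ = ‖v‖ := by rw [hneg, norm_neg]
  have h1 : ‖v‖ ^ 2 = inner (𝕜 := ℝ) x v.fst := by
    have h := proj_inner Sᗮ (mk2 x 0)
    rw [← hv, WithLp.prod_inner_apply] at h
    have hf : (mk2 x (0 : EuclideanSpace ℝ (Fin m))).ofLp.1 = x := rfl
    have hs : (mk2 x (0 : EuclideanSpace ℝ (Fin m))).ofLp.2 = 0 := rfl
    rw [hf, hs, inner_zero_left, add_zero] at h
    rw [show WithLp.fst v = v.ofLp.1 from rfl]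
    linarith
  have h2 : ‖v‖ ^ 2 = -inner (𝕜 := ℝ) y v.snd := by
    have h := proj_inner Sᗮ (mk2 0 y)
    rw [hneg, norm_neg, inner_neg_right, WithLp.prod_inner_apply] at h
    have hf : (mk2 (0 : EuclideanSpace ℝ (Fin n)) y).ofLp.1 = 0 := rfl
    have hs : (mk2 (0 : EuclideanSpace ℝ (Fin n)) y).ofLp.2 = y := rfl
    rw [hf, hs, inner_zero_left] at h
    rw [show WithLp.snd v = v.ofLp.2 from rfl]
    linarith
  have hvsq : ‖v‖ ^ 2 = ‖v.fst‖ ^ 2 + ‖v.snd‖ ^ 2 := WithLp.prod_norm_sq_eq_of_L2 v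
  have hc1 : ‖v‖ ^ 2 ≤ ‖x‖ * ‖v.fst‖ := h1 ▸ real_inner_le_norm x v.fst
  have hc2 : ‖v‖ ^ 2 ≤ ‖y‖ * ‖v.snd‖ := by
    rw [h2]
    calc -inner (𝕜 := ℝ) y v.snd ≤ |inner (𝕜 := ℝ) y v.snd| := neg_le_abs _
    _ ≤ ‖y‖ * ‖v.snd‖ := abs_real_inner_le_norm _ _
  rw [hnorm]
  rcases eq_or_lt_of_le (norm_nonneg v) with hz | hz
  · rw [← hz]; ring_nf; positivity
  · have hvpos : 0 < ‖v‖ ^ 2 := by positivity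
    have k1 : ‖v‖ ^ 2 * ‖v‖ ^ 2 ≤ ‖x‖ ^ 2 * ‖v.fst‖ ^ 2 := by
      calc ‖v‖ ^ 2 * ‖v‖ ^ 2 ≤ (‖x‖ * ‖v.fst‖) * (‖x‖ * ‖v.fst‖) :=
            mul_self_le_mul_self hvpos.le hc1
      _ = ‖x‖ ^ 2 * ‖v.fst‖ ^ 2 := by ring
    have k2 : ‖v‖ ^ 2 * ‖v‖ ^ 2 ≤ ‖y‖ ^ 2 * ‖v.snd‖ ^ 2 := by
      calc ‖v‖ ^ 2 * ‖v‖ ^ 2 ≤ (‖y‖ * ‖v.snd‖) * (‖y‖ * ‖v.snd‖) :=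
            mul_self_le_mul_self hvpos.le hc2
      _ = ‖y‖ ^ 2 * ‖v.snd‖ ^ 2 := by ring
    have t1 := mul_le_mul_of_nonneg_left k1 (sq_nonneg ‖y‖)
    have t2 := mul_le_mul_of_nonneg_left k2 (sq_nonneg ‖x‖)
    have h4 : ‖v‖ ^ 2 * (‖v‖ ^ 2 * (‖x‖ ^ 2 + ‖y‖ ^ 2)) ≤ ‖v‖ ^ 2 * (‖x‖ ^ 2 * ‖y‖ ^ 2) := by
      have hr : ‖v‖ ^ 2 * (‖x‖ ^ 2 * ‖y‖ ^ 2)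
          = ‖x‖ ^ 2 * ‖y‖ ^ 2 * ‖v.fst‖ ^ 2 + ‖x‖ ^ 2 * ‖y‖ ^ 2 * ‖v.snd‖ ^ 2 := by
        rw [hvsq]; ring
      rw [hr]; linarith
    have key : ‖v‖ ^ 2 * (‖x‖ ^ 2 + ‖y‖ ^ 2) ≤ ‖x‖ ^ 2 * ‖y‖ ^ 2 :=
      le_of_mul_le_mul_left h4 hvpos
    linarith [key]
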